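/- arXiv:2505.06757 — 3 statements merged into one kernel-verified Lean document; each statement's English description precedes it below -/
import Mathlib

section
/- Let G be a finitely generated Abelian group and f : G → ℤ finitely supported. If there is a character χ : G → ℂ of finite order (χ^m = 1 for some m ≥ 1) with ∑_{x ∈ G} f(x) · conj(χ(x)) = 0, then there exists a nonzero periodic bounded function a : G → ℤ (i.e., a is invariant under translation by some finite-index subgroup of G) with f * a = 0. -/
/-- If `f : G → ℤ` is finitely supported on a finitely generated
Abelian group and some finite-order character `χ` has vanishing Fourier coefficient
`∑ₓ f x * conj (χ x) = 0`, then there is a nonzero bounded periodic `a : G → ℤ`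
with `f * a = 0`. -/
theorem stmt1 (G : Type*) [AddCommGroup G] [AddGroup.FG G]
    (f : G → ℤ) (hf : (Function.support f).Finite)
    (χ : AddChar G ℂ) (hχ : ∀ x, ‖χ x‖ = 1)
    (hord : ∃ m : ℕ, 1 ≤ m ∧ ∀ x, (χ x) ^ m = 1)
    (hfourier : ∑ᶠ x : G, (f x : ℂ) * (starRingEnd ℂ) (χ x) = 0) :
    ∃ a : G → ℤ, a ≠ 0 ∧ (∃ C : ℤ, ∀ x, |a x| ≤ C) ∧
      (∃ Γ : AddSubgroup G, Γ.FiniteIndex ∧ ∀ x : G, ∀ h ∈ Γ, a (x + h) = a x) ∧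
      ∀ x : G, ∑ᶠ y : G, f y * a (x - y) = 0 := by
  classical
  obtain ⟨m, hm1, hm⟩ := hord
  -- χ never vanishes
  have hχne : ∀ y : G, χ y ≠ 0 := by
    intro y h
    have := hχ y
    rw [h] at this
    simp at this
  -- conjugate is the character at the negative
  have hconj : ∀ y : G, (starRingEnd ℂ) (χ y) = χ (-y) := by
    intro y
    have h2 : χ y * (starRingEnd ℂ) (χ y) = 1 := by
      rw [Complex.mul_conj]
      norm_cast
      rw [Complex.normSq_eq_norm_sq]
      rw [hχ y]; norm_num
    have h1 : χ y * χ (-y) = 1 := by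
      rw [AddChar.map_neg_eq_inv, mul_inv_cancel₀ (hχne y)]
    exact mul_left_cancel₀ (hχne y) (h2.trans h1.symm)
  -- the kernel subgroup
  let Γ : AddSubgroup G :=
  { carrier := {x | χ x = 1}
    zero_mem' := by simp [AddChar.map_zero_eq_one]
    add_mem' := by
      intro a b ha hb
      simp only [Set.mem_setOf_eq] at *
      rw [AddChar.map_add_eq_mul, ha, hb, one_mul]
    neg_mem' := by
      intro a ha
      simp only [Set.mem_setOf_eq] at *
      rw [AddChar.map_neg_eq_inv, ha, inv_one] }
  have hΓmem : ∀ x : G, x ∈ Γ ↔ χ x = 1 := fun x => Iff.rfl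
  -- finite quotient
  have hSfin : ({z : ℂ | z ^ m = 1}).Finite := by
    have hp : (Polynomial.X ^ m - Polynomial.C 1 : Polynomial ℂ) ≠ 0 := by
      intro h
      have := congrArg (Polynomial.eval 0) h
      simp [zero_pow (by omega : m ≠ 0)] at this
    have := Polynomial.finite_setOf_isRoot hp
    refine this.subset ?_
    intro z hz
    simp only [Set.mem_setOf_eq, Polynomial.IsRoot, Polynomial.eval_sub, Polynomial.eval_pow,
      Polynomial.eval_X, Polynomial.eval_C] at *
    rw [hz]; ring
  have hfinquot : Finite (G ⧸ Γ) := by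
    have : ∀ (x y : G), QuotientAddGroup.leftRel Γ x y → χ x = χ y := by
      intro x y hxy
      rw [QuotientAddGroup.leftRel_apply] at hxy
      have : χ (-x + y) = 1 := hxy
      rw [AddChar.map_add_eq_mul, AddChar.map_neg_eq_inv] at this
      exact (inv_mul_eq_one₀ (hχne x)).mp this
    let φ : G ⧸ Γ → {z : ℂ // z ^ m = 1} := Quotient.lift
      (fun x => ⟨χ x, hm x⟩) (by
        intro x y hxy
        exact Subtype.ext (this x y hxy))
    have hφinj : Function.Injective φ := by
      intro u v
      induction u using Quotient.ind
      induction v using Quotient.ind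
      rename_i x y
      intro h
      have hxy : χ x = χ y := congrArg Subtype.val h
      refine Quotient.sound (QuotientAddGroup.leftRel_apply.mpr ?_)
      show χ (-x + y) = 1
      rw [AddChar.map_add_eq_mul, AddChar.map_neg_eq_inv, hxy, inv_mul_cancel₀ (hχne y)]
    have : Finite {z : ℂ // z ^ m = 1} := hSfin.to_subtype
    exact Finite.of_injective φ hφinj
  have hΓfi : Γ.FiniteIndex := AddSubgroup.finiteIndex_of_finite_quotient
  -- the rational retraction ψ
  obtain ⟨q, hq⟩ := Submodule.exists_isCompl (Submodule.span ℚ {(1:ℂ)})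
  let e := LinearEquiv.toSpanNonzeroSingleton ℚ ℂ 1 one_ne_zero
  let ψ : ℂ →ₗ[ℚ] ℚ := e.symm.toLinearMap ∘ₗ (Submodule.span ℚ {(1:ℂ)}).linearProjOfIsCompl q hq
  have hψ1 : ψ 1 = 1 := by
    have h1 : ((Submodule.span ℚ {(1:ℂ)}).linearProjOfIsCompl q hq) (1:ℂ)
        = ⟨1, Submodule.mem_span_singleton_self 1⟩ := by
      exact Submodule.linearProjOfIsCompl_apply_left hq ⟨1, Submodule.mem_span_singleton_self 1⟩
    have h2 : e 1 = ⟨1, Submodule.mem_span_singleton_self 1⟩ := by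
      apply Subtype.ext
      show (1:ℚ) • (1:ℂ) = 1
      simp
    show e.symm (((Submodule.span ℚ {(1:ℂ)}).linearProjOfIsCompl q hq) (1:ℂ)) = 1
    rw [h1, ← h2, LinearEquiv.symm_apply_apply]
  -- the finite set of character values
  set S : Finset ℂ := hSfin.toFinset with hS
  have hχS : ∀ x : G, χ x ∈ S := by
    intro x
    rw [Set.Finite.mem_toFinset]
    exact hm x
  -- common denominator
  set N : ℤ := ∏ z ∈ S, ((ψ z).den : ℤ) with hN
  have hNpos : 0 < N := Finset.prod_pos (fun z _ => by exact_mod_cast (ψ z).pos)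
  have hint : ∀ z ∈ S, ∃ k : ℤ, ψ z * (N : ℚ) = (k : ℚ) := by
    intro z hz
    have hdvd : ((ψ z).den : ℤ) ∣ N := Finset.dvd_prod_of_mem _ hz
    obtain ⟨c, hc⟩ := hdvd
    refine ⟨(ψ z).num * c, ?_⟩
    rw [hc]
    push_cast
    rw [← mul_assoc, Rat.mul_den_eq_num]
  -- define a
  let a : G → ℤ := fun x => (ψ (χ x) * (N : ℚ)).num
  have ha : ∀ x : G, (a x : ℚ) = ψ (χ x) * (N : ℚ) := by
    intro x
    obtain ⟨k, hk⟩ := hint (χ x) (hχS x)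
    show ((ψ (χ x) * (N:ℚ)).num : ℚ) = _
    rw [hk]
    norm_cast
  refine ⟨a, ?_, ?_, ⟨Γ, hΓfi, ?_⟩, ?_⟩
  · -- a ≠ 0
    intro h
    have h0 : (a 0 : ℚ) = 0 := by rw [congrFun h 0]; norm_cast
    rw [ha 0, AddChar.map_zero_eq_one, hψ1, one_mul] at h0
    exact absurd h0 (by exact_mod_cast hNpos.ne')
  · -- bounded
    refine ⟨∑ z ∈ S, |(ψ z * (N:ℚ)).num|, fun x => ?_⟩
    exact Finset.single_le_sum (f := fun z => |(ψ z * (N:ℚ)).num|)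
      (fun z _ => abs_nonneg _) (hχS x)
  · -- periodic
    intro x h hh
    show (ψ (χ (x + h)) * (N : ℚ)).num = (ψ (χ x) * (N : ℚ)).num
    rw [AddChar.map_add_eq_mul, (hΓmem h).mp hh, mul_one]
  · -- convolution identity
    intro x
    set s : Finset G := hf.toFinset with hs
    have hsupp : Function.support (fun y => f y * a (x - y)) ⊆ ↑s := by
      intro y hy
      rw [Set.Finite.coe_toFinset]
      intro hfy
      exact hy (by simp [Function.mem_support.not.mp (fun h => h hfy), hfy])
    rw [finsum_eq_sum_of_support_subset _ hsupp]
    -- the fourier sum as a finset sum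
    have hsupp2 : Function.support (fun y => (f y : ℂ) * (starRingEnd ℂ) (χ y)) ⊆ ↑s := by
      intro y hy
      rw [Set.Finite.coe_toFinset]
      intro hfy
      apply hy
      simp [hfy]
    rw [finsum_eq_sum_of_support_subset _ hsupp2] at hfourier
    have hkey : ∑ y ∈ s, (f y : ℂ) * χ (x - y) = 0 := by
      have : ∀ y : G, (f y : ℂ) * χ (x - y) = χ x * ((f y : ℂ) * (starRingEnd ℂ) (χ y)) := by
        intro y
        rw [hconj, sub_eq_add_neg x y, AddChar.map_add_eq_mul]
        ring
      simp_rw [this, ← Finset.mul_sum, hfourier, mul_zero]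
    -- apply ψ
    have hψkey : ∑ y ∈ s, (f y : ℚ) * ψ (χ (x - y)) = 0 := by
      have := congrArg ψ hkey
      rw [map_sum, map_zero] at this
      rw [← this]
      apply Finset.sum_congr rfl
      intro y _
      have : (f y : ℂ) * χ (x - y) = ((f y : ℚ)) • χ (x - y) := by
        rw [Rat.smul_def]; push_cast; ring
      rw [this, map_smul, smul_eq_mul]
    have hsum : ((∑ y ∈ s, f y * a (x - y) : ℤ) : ℚ) = 0 := by
      push_cast
      calc ∑ y ∈ s, (f y : ℚ) * (a (x - y) : ℚ)
          = ∑ y ∈ s, (N : ℚ) * ((f y : ℚ) * ψ (χ (x - y))) := by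
            refine Finset.sum_congr rfl fun y _ => ?_
            rw [ha]; ring
        _ = (N : ℚ) * ∑ y ∈ s, (f y : ℚ) * ψ (χ (x - y)) := by rw [Finset.mul_sum]
        _ = 0 := by rw [hψkey, mul_zero]
    exact_mod_cast hsum
end

section
/- Let G be a finitely generated Abelian group, f : G → ℤ finitely supported, and a : G → ℤ bounded with f * a = 0. Then for all sufficiently large primes p (with threshold depending only on f and the sup-norm of a), one has (τ_p f) * a = 0, where τ_p f := ∑_x f(x) 𝟙_{{px}}. -/
/-- The dilate `τ_r f`, defined by `(τ_r f)(y) = ∑_{x : r·x = y} f x`. -/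
noncomputable def dilate {G : Type*} [AddCommGroup G] (r : ℕ) (f : G → ℤ) : G → ℤ :=
  fun y => ∑ᶠ x ∈ {x : G | r • x = y}, f x

open Finsupp AddMonoidAlgebra

section aux

variable {G : Type*} [AddCommGroup G]

/-- Convolution with `a` at the point `x`, as an additive hom on the monoid algebra. -/
noncomputable def convHom (a : G → ℤ) (x : G) : AddMonoidAlgebra ℤ G →+ ℤ :=
  AddMonoidAlgebra.liftNC (AddMonoidHom.id ℤ) (fun y => a (x - Multiplicative.toAdd y))

lemma convHom_single (a : G → ℤ) (x g : G) (c : ℤ) :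
    convHom a x (AddMonoidAlgebra.single g c) = c * a (x - g) :=
  AddMonoidAlgebra.liftNC_single _ _ _ _

lemma convHom_eq (a : G → ℤ) (x : G) (F : AddMonoidAlgebra ℤ G) :
    convHom a x F = ∑ y ∈ F.coeff.support, F.coeff y * a (x - y) := by
  conv_lhs => rw [← AddMonoidAlgebra.sum_coeff_single F]
  rw [map_finsuppSum]
  simp only [Finsupp.sum, convHom_single]

lemma convHom_single_mul (a : G → ℤ) (x g : G) (c : ℤ) (F : AddMonoidAlgebra ℤ G) :
    convHom a x (AddMonoidAlgebra.single g c * F) = c * convHom a (x - g) F := by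
  induction F using AddMonoidAlgebra.induction with
  | zero => simp
  | single_add h d F _ _ ih =>
      rw [mul_add, map_add, map_add, mul_add, ih, AddMonoidAlgebra.single_mul_single,
        convHom_single, convHom_single, sub_sub, mul_assoc]

lemma convHom_mul (a : G → ℤ) (x : G) (F F' : AddMonoidAlgebra ℤ G)
    (h : ∀ z, convHom a z F' = 0) : convHom a x (F * F') = 0 := by
  induction F using AddMonoidAlgebra.induction with
  | zero => simp
  | single_add g c F0 _ _ ih =>
      rw [add_mul, map_add, ih, convHom_single_mul, h, mul_zero, add_zero]

lemma convHom_pow (a : G → ℤ) (x : G) (F : AddMonoidAlgebra ℤ G)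
    (h : ∀ z, convHom a z F = 0) (n : ℕ) (hn : n ≠ 0) :
    convHom a x (F ^ n) = 0 := by
  obtain ⟨m, rfl⟩ := Nat.exists_eq_succ_of_ne_zero hn
  rw [pow_succ]
  exact convHom_mul a x _ F h

/-- The mod-`p` reduction of the monoid algebra, as a ring hom. -/
noncomputable def modHom (p : ℕ) :
    AddMonoidAlgebra ℤ G →+* AddMonoidAlgebra (ZMod p) G :=
  AddMonoidAlgebra.liftNCRingHom
    (AddMonoidAlgebra.singleZeroRingHom.comp (Int.castRingHom (ZMod p)))
    (AddMonoidAlgebra.of (ZMod p) G) (fun _ _ => Commute.all _ _)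

lemma modHom_single (p : ℕ) (g : G) (c : ℤ) :
    modHom p (AddMonoidAlgebra.single g c) = AddMonoidAlgebra.single g (c : ZMod p) := by
  rw [modHom, AddMonoidAlgebra.liftNCRingHom_single]
  show AddMonoidAlgebra.single (0 : G) ((c : ZMod p)) * AddMonoidAlgebra.single g 1 = _
  rw [AddMonoidAlgebra.single_mul_single, zero_add, mul_one]

lemma modHom_apply (p : ℕ) (F : AddMonoidAlgebra ℤ G) (z : G) :
    (modHom p F).coeff z = ((F.coeff z : ℤ) : ZMod p) := by
  classical
  induction F using AddMonoidAlgebra.induction with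
  | zero => simp
  | single_add g c F0 _ _ ih =>
      rw [map_add, AddMonoidAlgebra.coeff_add, AddMonoidAlgebra.coeff_add, Finsupp.add_apply, Finsupp.add_apply, ih, modHom_single,
        Int.cast_add]
      congr 1
      rw [AddMonoidAlgebra.coeff_single, AddMonoidAlgebra.coeff_single, Finsupp.single_apply, Finsupp.single_apply, apply_ite (Int.cast : ℤ → ZMod p),
        Int.cast_zero]

end aux

/-- **dilation lemma for `f*a = 0`.** If `f : G → ℤ` is finitely
supported, `a : G → ℤ` is bounded and `f * a = 0`, then `(τ_p f) * a = 0` for all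
sufficiently large primes `p`. -/
theorem stmt8 (G : Type*) [AddCommGroup G] [AddGroup.FG G]
    (f : G → ℤ) (hf : (Function.support f).Finite)
    (a : G → ℤ) (hbdd : ∃ C : ℤ, ∀ x, |a x| ≤ C)
    (hconv : ∀ x : G, ∑ᶠ y : G, f y * a (x - y) = 0) :
    ∃ N : ℕ, ∀ p : ℕ, p.Prime → N ≤ p →
      ∀ x : G, ∑ᶠ y : G, dilate p f y * a (x - y) = 0 := by
  classical
  obtain ⟨C, hC⟩ := hbdd
  have hC0 : 0 ≤ C := le_trans (abs_nonneg (a 0)) (hC 0)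
  set F : AddMonoidAlgebra ℤ G := AddMonoidAlgebra.ofCoeff (Finsupp.ofSupportFinite f hf) with hF
  have hFcoe : ∀ y, F.coeff y = f y := fun y => rfl
  -- `f * a = 0` in terms of `convHom`
  have hconvF : ∀ x, convHom a x F = 0 := by
    intro x
    rw [← hconv x, convHom_eq]
    refine (finsum_eq_sum_of_support_subset _ ?_).symm
    intro y hy
    rw [Function.mem_support] at hy
    have hy' : f y ≠ 0 := left_ne_zero_of_mul hy
    simpa [Finsupp.mem_support_iff, hFcoe] using hy'
  -- the bound
  set B : ℤ := ∑ y ∈ F.coeff.support, |f y| * C with hB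
  have hB0 : 0 ≤ B := Finset.sum_nonneg fun y _ => mul_nonneg (abs_nonneg _) hC0
  refine ⟨B.toNat + 1, fun p hp hNp x => ?_⟩
  haveI : Fact p.Prime := ⟨hp⟩
  -- the dilate as an element of the monoid algebra
  set T : AddMonoidAlgebra ℤ G := ∑ y ∈ F.coeff.support, AddMonoidAlgebra.single (p • y) (F.coeff y) with hT
  -- `T` agrees with `dilate p f`
  have hTd : ∀ z, dilate p f z = T.coeff z := by
    intro z
    have h1 : dilate p f z
        = ∑ y ∈ Finset.filter (· ∈ {x : G | p • x = z}) hf.toFinset, f y :=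
      finsum_mem_eq_sum_filter f _ hf
    rw [h1, hT, AddMonoidAlgebra.coeff_sum, Finsupp.finset_sum_apply]
    rw [Finset.sum_filter]
    have hsupp : hf.toFinset = F.coeff.support := by
      ext y
      simp [Finsupp.mem_support_iff, hFcoe, Function.mem_support]
    rw [hsupp]
    refine Finset.sum_congr rfl fun y _ => ?_
    simp [AddMonoidAlgebra.coeff_single, Finsupp.single_apply, hFcoe, eq_comm]
  -- Frobenius: `modHom p (F ^ p) = modHom p T`
  haveI : CharP (AddMonoidAlgebra (ZMod p) G) p :=
    charP_of_injective_ringHom (f := AddMonoidAlgebra.singleZeroRingHom)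
      (fun c d h => Finsupp.single_injective (0 : G) (congrArg AddMonoidAlgebra.coeff h)) p
  have hfrob : modHom p (F ^ p) = modHom p T := by
    have h1 : modHom p F = ∑ y ∈ F.coeff.support, AddMonoidAlgebra.single y ((F.coeff y : ZMod p)) := by
      conv_lhs => rw [← AddMonoidAlgebra.sum_coeff_single F]
      rw [Finsupp.sum, map_sum]
      exact Finset.sum_congr rfl fun y _ => modHom_single p y (F.coeff y)
    rw [map_pow, h1, sum_pow_char, hT, map_sum]
    refine Finset.sum_congr rfl fun y _ => ?_
    rw [modHom_single, AddMonoidAlgebra.single_pow, ZMod.pow_card]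
  -- hence every coefficient of `T - F ^ p` is divisible by `p`
  have hdvd_coeff : ∀ z : G, (p : ℤ) ∣ (T - F ^ p).coeff z := by
    intro z
    rw [← ZMod.intCast_zmod_eq_zero_iff_dvd, AddMonoidAlgebra.coeff_sub, Finsupp.sub_apply, Int.cast_sub,
      ← modHom_apply, ← modHom_apply, hfrob, sub_self]
  -- so `p` divides `convHom a x T`
  have hdvd : (p : ℤ) ∣ convHom a x T := by
    have h0 : convHom a x (F ^ p) = 0 := convHom_pow a x F hconvF p hp.ne_zero
    have : convHom a x T = convHom a x (T - F ^ p) := by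
      rw [map_sub, h0, sub_zero]
    rw [this, convHom_eq]
    exact Finset.dvd_sum fun y _ => Dvd.dvd.mul_right (hdvd_coeff y) _
  -- and `convHom a x T` is bounded by `B`
  have hbound : |convHom a x T| ≤ B := by
    rw [hT, map_sum]
    refine le_trans (Finset.abs_sum_le_sum_abs _ _) ?_
    refine Finset.sum_le_sum fun y _ => ?_
    rw [convHom_single, abs_mul, hFcoe]
    exact mul_le_mul_of_nonneg_left (hC _) (abs_nonneg _)
  -- conclude
  have hzero : convHom a x T = 0 := by
    refine Int.eq_zero_of_abs_lt_dvd hdvd ?_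
    calc |convHom a x T| ≤ B := hbound
      _ < (p : ℤ) := by
        have : (B.toNat : ℤ) + 1 ≤ (p : ℤ) := by exact_mod_cast hNp
        omega
  rw [← hzero, convHom_eq]
  simp only [hTd]
  refine finsum_eq_sum_of_support_subset _ ?_
  intro y hy
  rw [Function.mem_support] at hy
  have hy' : T.coeff y ≠ 0 := left_ne_zero_of_mul hy
  simpa [Finsupp.mem_support_iff] using hy'
end

section
/- Let n ≥ 1 and let ξ_1,…,ξ_n ∈ ℚ/ℤ be such that e^{2πiξ_1} + ⋯ + e^{2πiξ_n} = 0 and no proper nonempty subcollection of the e^{2πiξ_j} sums to zero. Then there exists ξ ∈ ℚ/ℤ such that each ξ_j + ξ has order dividing M, where M is the product of all primes ≤ n. -/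
open scoped Real
open Polynomial IntermediateField

theorem mann_finrank_adj (η : ℂ) (N : ℕ) (hN : 0 < N) (hη : IsPrimitiveRoot η N) :
    Module.finrank ℚ ℚ⟮η⟯ = N.totient := by
  have hint : IsIntegral ℚ η := (hη.isIntegral hN).tower_top
  rw [IntermediateField.adjoin.finrank hint, ← Polynomial.cyclotomic_eq_minpoly_rat hη hN,
    natDegree_cyclotomic]

theorem mann_adjoin_eq (η : ℂ) (p m : ℕ) (hco : Nat.Coprime p m) (hη : η ≠ 0) :
    ℚ⟮η ^ p⟯⟮η ^ m⟯.restrictScalars ℚ = ℚ⟮η⟯ := by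
  erw [IntermediateField.adjoin_simple_adjoin_simple]
  apply le_antisymm
  · apply IntermediateField.adjoin_le_iff.2
    rintro x (rfl | rfl)
    · exact pow_mem (IntermediateField.mem_adjoin_simple_self ℚ η) p
    · exact pow_mem (IntermediateField.mem_adjoin_simple_self ℚ η) m
  · apply IntermediateField.adjoin_le_iff.2
    rw [Set.singleton_subset_iff]
    obtain ⟨u, v, huv⟩ := ((Nat.isCoprime_iff_coprime (m := p) (n := m)).mpr hco)
    have h1 : η ^ p ∈ ℚ⟮η ^ p, η ^ m⟯ :=
      IntermediateField.subset_adjoin ℚ _ (by left; rfl)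
    have h2 : η ^ m ∈ ℚ⟮η ^ p, η ^ m⟯ :=
      IntermediateField.subset_adjoin ℚ _ (by right; rfl)
    have key : (η ^ p) ^ u * (η ^ m) ^ v = η := by
      rw [← zpow_natCast η p, ← zpow_natCast η m, ← zpow_mul, ← zpow_mul, ← zpow_add₀ hη]
      rw [show (p : ℤ) * u + (m : ℤ) * v = 1 by linarith [huv]]
      exact zpow_one η
    have := mul_mem (zpow_mem h1 u) (zpow_mem h2 v)
    rwa [key] at this

theorem mann_deg_eq (p a m N : ℕ) (hp : p.Prime) (ha : 1 ≤ a) (hm : 0 < m) (hpm : ¬ p ∣ m)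
    (hN : N = p ^ a * m) (η : ℂ) (hη : IsPrimitiveRoot η N) (c : ℕ)
    (hc : (p ^ a).totient = (p ^ (a - 1)).totient * c) :
    (minpoly (ℚ⟮η ^ p⟯ : IntermediateField ℚ ℂ) (η ^ m)).natDegree = c := by
  have hp1 : 1 < p := hp.one_lt
  have hN0 : 0 < N := by
    rw [hN]; exact Nat.mul_pos (pow_pos (by omega) a) hm
  have hco : Nat.Coprime p m := (Nat.Prime.coprime_iff_not_dvd hp).mpr hpm
  have haa : p ^ a = p * p ^ (a - 1) := by
    conv_lhs => rw [show a = 1 + (a - 1) by omega]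
    rw [pow_add, pow_one]
  have hν : IsPrimitiveRoot (η ^ p) (p ^ (a - 1) * m) :=
    hη.pow hN0 (by rw [hN, haa, mul_assoc])
  have hζ : IsPrimitiveRoot (η ^ m) (p ^ a) := hη.pow hN0 (by rw [hN, mul_comm])
  have hζint : IsIntegral ℚ (η ^ m) := ((hζ.isIntegral (pow_pos (by omega) a)).tower_top)
  set K : IntermediateField ℚ ℂ := ℚ⟮η ^ p⟯ with hK
  have hζintK : IsIntegral K (η ^ m) := hζint.tower_top
  have hνint : IsIntegral ℚ (η ^ p) :=
    ((hν.isIntegral (Nat.mul_pos (pow_pos (by omega) _) hm)).tower_top)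
  haveI : FiniteDimensional ℚ K := IntermediateField.adjoin.finiteDimensional hνint
  haveI : FiniteDimensional K K⟮η ^ m⟯ := IntermediateField.adjoin.finiteDimensional hζintK
  have tower : Module.finrank ℚ K * Module.finrank K K⟮η ^ m⟯
      = Module.finrank ℚ K⟮η ^ m⟯ := Module.finrank_mul_finrank ℚ K K⟮η ^ m⟯
  have hrs : Module.finrank ℚ (K⟮η ^ m⟯.restrictScalars ℚ) = Module.finrank ℚ K⟮η ^ m⟯ := rfl
  have hEq : K⟮η ^ m⟯.restrictScalars ℚ = ℚ⟮η⟯ := mann_adjoin_eq η p m hco (hη.ne_zero hN0.ne')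
  have h1 : Module.finrank ℚ K⟮η ^ m⟯ = N.totient := by
    rw [← hrs, hEq]; exact mann_finrank_adj η N hN0 hη
  have h2 : Module.finrank ℚ K = (p ^ (a - 1) * m).totient :=
    mann_finrank_adj _ _ (Nat.mul_pos (pow_pos (by omega) _) hm) hν
  have h3 : Module.finrank K K⟮η ^ m⟯ = (minpoly K (η ^ m)).natDegree :=
    IntermediateField.adjoin.finrank hζintK
  have htotN : N.totient = (p ^ a).totient * m.totient := by
    rw [hN, Nat.totient_mul (Nat.Coprime.pow_left _ hco)]
  have htotK : (p ^ (a - 1) * m).totient = (p ^ (a - 1)).totient * m.totient :=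
    Nat.totient_mul (Nat.Coprime.pow_left _ hco)
  have hpos : 0 < (p ^ (a - 1)).totient * m.totient :=
    Nat.mul_pos (Nat.totient_pos.2 (pow_pos (by omega) _)) (Nat.totient_pos.2 hm)
  have key : Module.finrank ℚ K * (minpoly K (η ^ m)).natDegree
      = Module.finrank ℚ K * c := by
    rw [← h3, tower, h1, htotN, hc, h2, htotK]; ring
  exact Nat.eq_of_mul_eq_mul_left Module.finrank_pos key

theorem mann_indep (p a m N : ℕ) (hp : p.Prime) (ha : 1 ≤ a) (hm : 0 < m) (hpm : ¬ p ∣ m)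
    (hN : N = p ^ a * m) (η : ℂ) (hη : IsPrimitiveRoot η N) (c : ℕ)
    (hc : (p ^ a).totient = (p ^ (a - 1)).totient * c)
    (r : ℕ) (hr : r ≤ c) (S : Fin r → ℂ)
    (hSK : ∀ b, S b ∈ (ℚ⟮η ^ p⟯ : IntermediateField ℚ ℂ))
    (hsum : ∑ b, S b * (η ^ m) ^ (b : ℕ) = 0) : ∀ b, S b = 0 := by
  have hN0 : 0 < N := by
    rw [hN]; exact Nat.mul_pos (pow_pos hp.pos a) hm
  set K : IntermediateField ℚ ℂ := ℚ⟮η ^ p⟯ with hK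
  have hζ : IsPrimitiveRoot (η ^ m) (p ^ a) := hη.pow hN0 (by rw [hN, mul_comm])
  have hζint : IsIntegral ℚ (η ^ m) :=
    ((hζ.isIntegral (pow_pos hp.pos a)).tower_top)
  have hζintK : IsIntegral K (η ^ m) := hζint.tower_top
  have hdeg : (minpoly K (η ^ m)).natDegree = c :=
    mann_deg_eq p a m N hp ha hm hpm hN η hη c hc
  set S' : Fin r → K := fun b => ⟨S b, hSK b⟩ with hS'
  set q : Polynomial K := ∑ b : Fin r, Polynomial.C (S' b) * Polynomial.X ^ (b : ℕ) with hq
  have haev : Polynomial.aeval (η ^ m) q = 0 := by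
    rw [hq, map_sum]
    convert hsum using 2 with b
    simp [S']
  have hq0 : q = 0 := by
    by_contra hne
    have hle := minpoly.degree_le_of_ne_zero K (η ^ m) hne haev
    have hdegq : q.degree < (r : WithBot ℕ) := by
      rw [hq]
      apply lt_of_le_of_lt (Polynomial.degree_sum_le _ _)
      rw [Finset.sup_lt_iff (by exact_mod_cast WithBot.bot_lt_coe r)]
      intro b _
      exact lt_of_le_of_lt (Polynomial.degree_C_mul_X_pow_le _ _)
        (by exact_mod_cast b.2)
    have hmono : ((minpoly K (η ^ m)).natDegree : WithBot ℕ) = (minpoly K (η ^ m)).degree :=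
      (Polynomial.degree_eq_natDegree (minpoly.ne_zero hζintK)).symm
    rw [hdeg] at hmono
    have : (c : WithBot ℕ) < (r : WithBot ℕ) := lt_of_le_of_lt (hmono.le.trans hle) hdegq
    have hcr : c < r := by exact_mod_cast this
    omega
  intro b
  have : S' b = 0 := by
    have hcoeff : q.coeff (b : ℕ) = S' b := by
      rw [hq, Polynomial.finset_sum_coeff]
      rw [Finset.sum_eq_single b]
      · simp
      · intro b' _ hbb
        have hne : ¬ ((b : ℕ) = (b' : ℕ)) := fun h => hbb (Fin.val_injective h.symm)
        simp [Polynomial.coeff_C_mul, Polynomial.coeff_X_pow, hne]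
      · simp
    rw [hq0] at hcoeff
    simpa using hcoeff.symm
  simpa [hS'] using congrArg (Subtype.val) this

theorem mann_core : ∀ N : ℕ, 0 < N → ∀ n : ℕ, 1 ≤ n → ∀ z : Fin n → ℂ,
    (∀ j, z j ^ N = 1) → (∑ j, z j = 0) →
    (∀ I : Finset (Fin n), I.Nonempty → I ≠ Finset.univ → ∑ j ∈ I, z j ≠ 0) →
    ∃ w : ℂ, (∃ k : ℕ, 0 < k ∧ w ^ k = 1) ∧
      ∀ j, (z j * w) ^ (∏ p ∈ Finset.filter Nat.Prime (Finset.range (n + 1)), p) = 1 := by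
  intro N
  induction N using Nat.strong_induction_on with
  | _ N IH =>
  intro hN n hn z hzN hsum hmin
  by_cases hbad : ∃ p : ℕ, p.Prime ∧ p ∣ N ∧ (p * p ∣ N ∨ n < p)
  · -- bad case : descend
    obtain ⟨p, hp, hpN, hor⟩ := hbad
    haveI := Fact.mk hp
    haveI : NeZero N := ⟨hN.ne'⟩
    have hp2 : 2 ≤ p := hp.two_le
    set a := N.factorization p with haDef
    have ha : 1 ≤ a := hp.factorization_pos_of_dvd hN.ne' hpN
    set m := N / p ^ a with hmDef
    have hNsplit : N = p ^ a * m := (Nat.ordProj_mul_ordCompl_eq_self N p).symm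
    have hpm : ¬ p ∣ m := Nat.not_dvd_ordCompl hp hN.ne'
    have hm : 0 < m := Nat.ordCompl_pos p hN.ne'
    set η := Complex.exp (2 * Real.pi * Complex.I / N) with hηDef
    have hη : IsPrimitiveRoot η N := Complex.isPrimitiveRoot_exp N hN.ne'
    have hη0 : η ≠ 0 := hη.ne_zero hN.ne'
    choose e he hez using fun j => hη.eq_pow_of_pow_eq_one (hzN j)
    set ζ := η ^ m with hζDef
    have hζ : IsPrimitiveRoot ζ (p ^ a) := hη.pow hN (by rw [hNsplit, mul_comm])
    have hζ0 : ζ ≠ 0 := pow_ne_zero _ hη0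
    have hζpa : ζ ^ (p ^ a) = 1 := hζ.pow_eq_one
    have hmZ : ((m : ZMod p)) ≠ 0 := by
      rw [Ne, ZMod.natCast_eq_zero_iff]; exact hpm
    set bj : Fin n → ℕ := fun j => ((e j : ZMod p) * (m : ZMod p)⁻¹).val with hbjDef
    have hbjlt : ∀ j, bj j < p := fun j => ZMod.val_lt _
    have hmodj : ∀ j, (p : ℤ) ∣ (e j : ℤ) - (bj j : ℤ) * m := by
      intro j
      have h1 : ((bj j * m : ℕ) : ZMod p) = ((e j : ℕ) : ZMod p) := by
        rw [Nat.cast_mul, hbjDef]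
        rw [ZMod.natCast_val, ZMod.cast_id, mul_assoc,
          inv_mul_cancel₀ hmZ, mul_one]
      have h2 := (ZMod.natCast_eq_natCast_iff _ _ _).1 h1
      have h3 := h2.dvd
      have h4 : ((e j : ℤ) - (bj j * m : ℕ)) = (e j : ℤ) - (bj j : ℤ) * m := by push_cast; ring
      rwa [h4] at h3
    choose t ht using fun j => (hmodj j)
    set w : Fin n → ℂ := fun j => η ^ ((e j : ℤ) - (bj j : ℤ) * m) with hwDef
    have hwK : ∀ j, w j ∈ (ℚ⟮η ^ p⟯ : IntermediateField ℚ ℂ) := by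
      intro j
      have hkey : w j = (η ^ p) ^ (t j) := by
        rw [hwDef, ← zpow_natCast η p, ← zpow_mul, ← ht j]
      rw [hkey]
      exact zpow_mem (IntermediateField.mem_adjoin_simple_self ℚ (η ^ p)) _
    have hzw : ∀ j, z j = w j * ζ ^ (bj j) := by
      intro j
      rw [← hez j, hwDef, hζDef, ← pow_mul, ← zpow_natCast η (m * bj j),
        ← zpow_add₀ hη0, ← zpow_natCast η (e j)]
      congr 1
      push_cast; ring
    have hwpow : ∀ j, w j ^ (N / p) = 1 := by
      intro j
      have hNp : (N / p) * p = N := Nat.div_mul_cancel hpN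
      rw [hwDef, ← zpow_natCast _ (N / p), ← zpow_mul, ht j]
      have hstep : (p : ℤ) * t j * (N / p : ℕ) = (N : ℤ) * t j := by
        have : ((N / p : ℕ) : ℤ) * p = N := by exact_mod_cast congrArg (fun x : ℕ => (x : ℤ)) hNp
        calc (p : ℤ) * t j * (N / p : ℕ) = ((N / p : ℕ) : ℤ) * p * t j := by ring
          _ = (N : ℤ) * t j := by rw [this]
      rw [hstep, zpow_mul, zpow_natCast, hη.pow_eq_one, one_zpow]
    set S : ℕ → ℂ := fun b => ∑ j ∈ Finset.univ.filter (fun j => bj j = b), w j with hSDef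
    have hfiber : ∀ b, ∑ j ∈ Finset.univ.filter (fun j => bj j = b), z j = S b * ζ ^ b := by
      intro b
      rw [hSDef, Finset.sum_mul]
      exact Finset.sum_congr rfl fun j hj => by
        rw [hzw j, (Finset.mem_filter.1 hj).2]
    have hsum2 : ∑ b ∈ Finset.range p, S b * ζ ^ b = 0 := by
      rw [← hsum]
      calc ∑ b ∈ Finset.range p, S b * ζ ^ b
          = ∑ b ∈ Finset.range p, ∑ j ∈ Finset.univ.filter (fun j => bj j = b), z j :=
            Finset.sum_congr rfl fun b _ => (hfiber b).symm
        _ = ∑ j, z j :=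
            Finset.sum_fiberwise_of_maps_to (fun j _ => Finset.mem_range.2 (hbjlt j)) z
    have hSK : ∀ b : ℕ, S b ∈ (ℚ⟮η ^ p⟯ : IntermediateField ℚ ℂ) := fun b =>
      sum_mem fun j _ => hwK j
    have hSzero : ∀ b, b < p → S b = 0 := by
      rcases Nat.lt_or_ge a 2 with hlt | h2
      · -- a = 1, so n < p
        have ha1 : a = 1 := by omega
        have hnp : n < p := by
          rcases hor with hpp | hnp
          · exfalso
            have : 2 ≤ a := by
              rw [haDef]
              have := (Nat.Prime.pow_dvd_iff_le_factorization hp hN.ne').1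
                (by rwa [pow_two] : p ^ 2 ∣ N)
              omega
            omega
          · exact hnp
        rw [ha1, pow_one] at hζ hζpa
        have hζ1 : ζ ≠ 1 := hζ.ne_one hp.one_lt
        have hrel : ∑ b ∈ Finset.range p, ζ ^ b = 0 := by
          rw [geom_sum_eq hζ1 p, hζpa, sub_self, zero_div]
        have hL : S (p - 1) ∈ (ℚ⟮η ^ p⟯ : IntermediateField ℚ ℂ) := hSK _
        have hsum3 : ∑ b ∈ Finset.range p, (S b - S (p - 1)) * ζ ^ b = 0 := by
          simp only [sub_mul, Finset.sum_sub_distrib]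
          rw [hsum2]
          rw [show ∑ b ∈ Finset.range p, S (p-1) * ζ ^ b
            = S (p-1) * ∑ b ∈ Finset.range p, ζ ^ b from (Finset.mul_sum _ _ _).symm]
          rw [hrel, mul_zero, sub_zero]
        have hsum4 : ∑ b ∈ Finset.range (p - 1), (S b - S (p - 1)) * ζ ^ b = 0 := by
          have hstep := Finset.sum_range_succ (fun b => (S b - S (p - 1)) * ζ ^ b) (p - 1)
          rw [show p - 1 + 1 = p by omega] at hstep
          rw [hstep] at hsum3
          simpa using hsum3
        have hc : (p ^ a).totient = (p ^ (a - 1)).totient * (p - 1) := by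
          rw [ha1]
          simp [Nat.totient_prime hp]
        have hind := mann_indep p a m N hp ha hm hpm hNsplit η hη (p - 1) hc (p - 1) le_rfl
          (fun b : Fin (p - 1) => S b.val - S (p - 1))
          (fun b => sub_mem (hSK _) (hSK _))
          (by rw [Fin.sum_univ_eq_sum_range (fun b => (S b - S (p - 1)) * ζ ^ b) (p - 1)]
              exact hsum4)
        have hnsurj : ∃ b0, b0 < p ∧ ∀ j, bj j ≠ b0 := by
          by_contra hcon
          push_neg at hcon
          have hsubset : Finset.range p ⊆ Finset.image bj Finset.univ := by
            intro b hb
            obtain ⟨j, hj⟩ := hcon b (Finset.mem_range.1 hb)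
            exact Finset.mem_image.2 ⟨j, Finset.mem_univ j, hj⟩
          have h5 := Finset.card_le_card hsubset
          have h6 := Finset.card_image_le (s := (Finset.univ : Finset (Fin n))) (f := bj)
          rw [Finset.card_range] at h5
          rw [Finset.card_univ, Fintype.card_fin] at h6
          omega
        obtain ⟨b0, hb0p, hb0⟩ := hnsurj
        have hSb0 : S b0 = 0 := by
          rw [hSDef]
          exact Finset.sum_eq_zero fun j hj => ((hb0 j) (Finset.mem_filter.1 hj).2).elim
        have hL0 : S (p - 1) = 0 := by
          rcases eq_or_ne b0 (p - 1) with rfl | hne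
          · exact hSb0
          · have h7 := hind ⟨b0, by omega⟩
            simp only [sub_eq_zero] at h7
            rw [← h7, hSb0]
        intro b hb
        rcases eq_or_ne b (p - 1) with rfl | hne
        · exact hL0
        · have h7 := hind ⟨b, by omega⟩
          simp only [sub_eq_zero] at h7
          rw [h7, hL0]
      · -- a >= 2
        have hppow : p ^ (a - 1) = p ^ (a - 1 - 1) * p := by
          conv_lhs => rw [show a - 1 = (a - 1 - 1) + 1 by omega]
          rw [pow_succ]
        have hc : (p ^ a).totient = (p ^ (a - 1)).totient * p := by
          rw [Nat.totient_prime_pow hp (show 0 < a by omega),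
            Nat.totient_prime_pow hp (show 0 < a - 1 by omega), hppow]
          ring
        have hind := mann_indep p a m N hp ha hm hpm hNsplit η hη p hc p le_rfl
          (fun b : Fin p => S b.val) (fun b => hSK _)
          (by rw [Fin.sum_univ_eq_sum_range (fun b => S b * ζ ^ b) p]
              exact hsum2)
        intro b hb
        exact hind ⟨b, hb⟩
    -- all fibers but one are empty
    have hj0 : (0 : ℕ) < n := hn
    set j0 : Fin n := ⟨0, hj0⟩ with hj0Def
    set bstar := bj j0 with hbstarDef
    set C : Finset (Fin n) := Finset.univ.filter (fun j => bj j = bstar) with hCDef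
    have hCmem : j0 ∈ C := Finset.mem_filter.2 ⟨Finset.mem_univ _, rfl⟩
    have hCuniv : C = Finset.univ := by
      by_contra hne
      exact hmin C ⟨j0, hCmem⟩ hne
        (by rw [hCDef, hfiber bstar, hSzero bstar (hbjlt j0), zero_mul])
    have hbconst : ∀ j, bj j = bstar := by
      intro j
      have : j ∈ C := hCuniv ▸ Finset.mem_univ j
      exact (Finset.mem_filter.1 this).2
    set w0 : ℂ := ζ ^ (p ^ a - bstar) with hw0Def
    have hbstar_le : bstar ≤ p ^ a := by
      have h8 : bstar < p := hbjlt j0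
      have h9 : p ≤ p ^ a := le_self_pow₀ (by omega) (by omega)
      omega
    have hzw0 : ∀ j, z j * w0 = w j := by
      intro j
      rw [hzw j, hbconst j, mul_assoc, hw0Def, ← pow_add,
        show bstar + (p ^ a - bstar) = p ^ a by omega, hζpa, mul_one]
    have hNp_lt : N / p < N := Nat.div_lt_self hN hp.one_lt
    have hNp_pos : 0 < N / p := Nat.div_pos (Nat.le_of_dvd hN hpN) hp.pos
    obtain ⟨w1, ⟨k1, hk1, hwk1⟩, hfin⟩ := IH (N / p) hNp_lt hNp_pos n hn (fun j => z j * w0)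
      (fun j => by show (z j * w0) ^ (N / p) = 1; rw [hzw0 j]; exact hwpow j)
      (by rw [← Finset.sum_mul, hsum, zero_mul])
      (fun I hI hIu => by
        rw [← Finset.sum_mul]
        exact mul_ne_zero (hmin I hI hIu) (pow_ne_zero _ hζ0))
    have hw0pow : w0 ^ (p ^ a) = 1 := by
      rw [hw0Def, ← pow_mul, mul_comm, pow_mul, hζpa, one_pow]
    refine ⟨w0 * w1, ⟨p ^ a * k1, Nat.mul_pos (pow_pos hp.pos a) hk1, ?_⟩, fun j => ?_⟩
    · rw [mul_pow, pow_mul, hw0pow, one_pow, one_mul, mul_comm (p ^ a) k1, pow_mul, hwk1,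
        one_pow]
    · rw [← mul_assoc]
      exact hfin j
  · -- good case : N divides the primorial
    push_neg at hbad
    have hsq : Squarefree N := by
      rw [Nat.squarefree_iff_prime_squarefree]
      intro p hp hdvd
      rcases hbad p hp (dvd_trans (dvd_mul_right p p) hdvd) with ⟨h1, _⟩
      exact h1 hdvd
    have hsub : N.primeFactors ⊆ Finset.filter Nat.Prime (Finset.range (n + 1)) := by
      intro p hpmem
      obtain ⟨hp, hpdvd, -⟩ := Nat.mem_primeFactors.1 hpmem
      rcases hbad p hp hpdvd with ⟨-, h2⟩
      exact Finset.mem_filter.2 ⟨Finset.mem_range.2 (by omega), hp⟩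
    have hNeq : ∏ p ∈ N.primeFactors, p = N := Nat.prod_primeFactors_of_squarefree hsq
    have hdvd : N ∣ ∏ p ∈ Finset.filter Nat.Prime (Finset.range (n + 1)), p := by
      rw [← hNeq]
      exact Finset.prod_dvd_prod_of_subset _ _ _ hsub
    obtain ⟨t, ht⟩ := hdvd
    exact ⟨1, ⟨1, one_pos, one_pow 1⟩, fun j => by
      rw [mul_one, ht, pow_mul, hzN j, one_pow]⟩

/-- **Mann's theorem.** If `e^{2πiξ₁} + ⋯ + e^{2πiξₙ} = 0` is a
minimal vanishing sum of roots of unity (ξⱼ ∈ ℚ, viewed in ℚ/ℤ), then after a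
common rotation `ξ` all the `ξⱼ + ξ` have order dividing `M`, the product of the
primes `≤ n`. -/
theorem stmt15 (n : ℕ) (hn : 1 ≤ n) (ξ : Fin n → ℚ)
    (hsum : ∑ j : Fin n, Complex.exp (2 * π * Complex.I * (ξ j : ℂ)) = 0)
    (hmin : ∀ I : Finset (Fin n), I.Nonempty → I ≠ Finset.univ →
      ∑ j ∈ I, Complex.exp (2 * π * Complex.I * (ξ j : ℂ)) ≠ 0) :
    ∃ ξ' : ℚ, ∀ j : Fin n,
      ∃ z : ℤ, ((∏ p ∈ Finset.filter Nat.Prime (Finset.range (n + 1)), p : ℕ) : ℚ)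
        * (ξ j + ξ') = (z : ℚ) := by
  set z : Fin n → ℂ := fun j => Complex.exp (2 * π * Complex.I * (ξ j : ℂ)) with hzDef
  set N : ℕ := ∏ j : Fin n, (ξ j).den with hNDef
  have hN : 0 < N := Finset.prod_pos fun j _ => (ξ j).pos
  have hint : ∀ j, ∃ c : ℤ, (N : ℚ) * ξ j = (c : ℚ) := by
    intro j
    have hdvd : (ξ j).den ∣ N := Finset.dvd_prod_of_mem _ (Finset.mem_univ j)
    obtain ⟨c, hc⟩ := hdvd
    refine ⟨c * (ξ j).num, ?_⟩
    push_cast [hc]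
    rw [mul_comm ((ξ j).den : ℚ) (c : ℚ), mul_assoc]
    congr 1
    rw [mul_comm]
    exact_mod_cast Rat.mul_den_eq_num (ξ j)
  have hzN : ∀ j, z j ^ N = 1 := by
    intro j
    obtain ⟨c, hc⟩ := hint j
    rw [hzDef, ← Complex.exp_nat_mul]
    rw [show (N : ℂ) * (2 * π * Complex.I * (ξ j : ℂ)) = (c : ℂ) * (2 * π * Complex.I) by
      have : ((N : ℚ) * ξ j : ℚ) = (c : ℚ) := hc
      have h2 : ((N : ℂ)) * (ξ j : ℂ) = (c : ℂ) := by exact_mod_cast congrArg (fun q : ℚ => (q : ℂ)) this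
      calc (N : ℂ) * (2 * π * Complex.I * (ξ j : ℂ))
          = ((N : ℂ) * (ξ j : ℂ)) * (2 * π * Complex.I) := by ring
        _ = (c : ℂ) * (2 * π * Complex.I) := by rw [h2]]
    exact Complex.exp_int_mul_two_pi_mul_I c
  obtain ⟨w, ⟨k, hk, hwk⟩, hfin⟩ := mann_core N hN n hn z hzN hsum hmin
  haveI : NeZero k := ⟨hk.ne'⟩
  obtain ⟨i, hik, hiw⟩ := (Complex.isPrimitiveRoot_exp k hk.ne').eq_pow_of_pow_eq_one hwk
  set ξ' : ℚ := (i : ℚ) / (k : ℚ) with hξ'Def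
  have hw : w = Complex.exp (2 * π * Complex.I * (ξ' : ℂ)) := by
    rw [← hiw, ← Complex.exp_nat_mul]
    congr 1
    have hk0 : (k : ℂ) ≠ 0 := by exact_mod_cast hk.ne'
    push_cast [hξ'Def]
    field_simp
  refine ⟨ξ', fun j => ?_⟩
  have hfj := hfin j
  rw [hw, hzDef] at hfj
  simp only at hfj
  rw [← Complex.exp_add, ← Complex.exp_nat_mul] at hfj
  set M : ℕ := ∏ p ∈ Finset.filter Nat.Prime (Finset.range (n + 1)), p with hMDef
  obtain ⟨tt, htt⟩ := Complex.exp_eq_one_iff.1 hfj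
  have hcancel : (M : ℂ) * ((ξ j : ℂ) + (ξ' : ℂ)) = (tt : ℂ) := by
    have h2pi : (2 * (π : ℂ) * Complex.I) ≠ 0 := by
      simp [Real.pi_ne_zero, Complex.I_ne_zero]
    apply mul_right_cancel₀ h2pi
    calc (M : ℂ) * ((ξ j : ℂ) + (ξ' : ℂ)) * (2 * π * Complex.I)
        = (M : ℂ) * (2 * π * Complex.I * (ξ j : ℂ) + 2 * π * Complex.I * (ξ' : ℂ)) := by ring
      _ = (tt : ℂ) * (2 * π * Complex.I) := htt
  refine ⟨tt, ?_⟩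
  have : ((M : ℚ) * (ξ j + ξ') : ℚ) = ((tt : ℚ) : ℚ) := by
    have := hcancel
    push_cast at this ⊢
    exact_mod_cast this
  exact_mod_cast this
end
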